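/- Let ε ∈ (0,1), 0 < h ≤ ε², and u0 ∈ ℝ with u0 ∉ {0, 1, -1}. Let (u_n) be any real sequence with u_0 = u0 satisfying (u_n - u_{n-1})/h + (1/ε²)(u_n³ - u_n) = 0 for all n ≥ 1. Then: if u0 > 1 the sequence satisfies u_n > 1 for all n and is nonincreasing; if u0 < -1 it satisfies u_n < -1 for all n and is nondecreasing; if 0 < u0 < 1 it satisfies 0 < u_n < 1 for all n and is nondecreasing; if -1 < u0 < 0 it satisfies -1 < u_n < 0 for all n and is nonincreasing; and in all cases u_n converges to sign(u0) as n → ∞. -/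

import Mathlib

lemma euler_fmono (c : ℝ) (hc0 : 0 < c) (hc1 : c ≤ 1) {a b : ℝ} (hab : a ≤ b) :
    a + c * (a^3 - a) ≤ b + c * (b^3 - b) := by
  have h1 : 0 ≤ a^2 + a*b + b^2 := by nlinarith [sq_nonneg (a+b), sq_nonneg a, sq_nonneg b]
  nlinarith [mul_nonneg (mul_nonneg hc0.le (sub_nonneg.2 hab)) h1,
    mul_nonneg (sub_nonneg.2 hab) (sub_nonneg.2 hc1)]

lemma euler_fixedpt (c : ℝ) (hc0 : 0 < c) (u : ℕ → ℝ)
    (heq : ∀ n, u n = u (n+1) + c * ((u (n+1))^3 - u (n+1)))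
    (L : ℝ) (hL : Filter.Tendsto u Filter.atTop (nhds L)) : L ^ 3 = L := by
  have h1 : Filter.Tendsto (fun n => u (n+1)) Filter.atTop (nhds L) :=
    hL.comp (Filter.tendsto_add_atTop_nat 1)
  have h2 : Filter.Tendsto (fun n => u (n+1) + c * ((u (n+1))^3 - u (n+1)))
      Filter.atTop (nhds (L + c * (L^3 - L))) :=
    h1.add (((h1.pow 3).sub h1).const_mul c)
  have h3 : Filter.Tendsto u Filter.atTop (nhds (L + c * (L^3 - L))) :=
    h2.congr fun n => (heq n).symm
  have h4 := tendsto_nhds_unique hL h3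
  have h5 : c * (L^3 - L) = 0 := by linarith
  rcases mul_eq_zero.mp h5 with h | h
  · exact absurd h hc0.ne'
  · linarith

lemma euler_aux_gt1 (c : ℝ) (hc0 : 0 < c) (hc1 : c ≤ 1) (u : ℕ → ℝ)
    (heq : ∀ n, u n = u (n+1) + c * ((u (n+1))^3 - u (n+1)))
    (h0 : 1 < u 0) :
    (∀ n, 1 < u n) ∧ Antitone u ∧ Filter.Tendsto u Filter.atTop (nhds 1) := by
  have key : ∀ n, 1 < u n := by
    intro n; induction n with
    | zero => exact h0
    | succ n ih =>
      by_contra hle; push_neg at hle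
      have h2 : u n ≤ 1 + c * (1^3 - 1) := (heq n).trans_le (euler_fmono c hc0 hc1 hle)
      norm_num at h2; linarith
  have hanti : Antitone u := antitone_nat_of_succ_le fun n => by
    have h1 := key (n+1)
    have h2 : 0 ≤ (u (n+1))^3 - u (n+1) := by
      nlinarith [mul_nonneg (mul_nonneg (by linarith : (0:ℝ) ≤ u (n+1))
        (by linarith : (0:ℝ) ≤ u (n+1) - 1)) (by linarith : (0:ℝ) ≤ u (n+1) + 1)]
    have h3 := heq n
    nlinarith [mul_nonneg hc0.le h2]
  have hbdd : BddBelow (Set.range u) := ⟨1, by rintro x ⟨n, rfl⟩; exact (key n).le⟩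
  have htend := tendsto_atTop_ciInf hanti hbdd
  have hL1 : 1 ≤ ⨅ n, u n := le_ciInf fun n => (key n).le
  have hfix := euler_fixedpt c hc0 u heq _ htend
  have hLe : (⨅ n, u n) ≤ 1 := by
    by_contra hgt; push_neg at hgt
    have h6 : 0 < (⨅ n, u n) * (((⨅ n, u n) - 1) * ((⨅ n, u n) + 1)) :=
      mul_pos (by linarith) (mul_pos (by linarith) (by linarith))
    have h7 : 0 < (⨅ n, u n)^3 - (⨅ n, u n) := by
      rw [show (⨅ n, u n)^3 - (⨅ n, u n)
        = (⨅ n, u n) * (((⨅ n, u n) - 1) * ((⨅ n, u n) + 1)) from by ring]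
      exact h6
    linarith
  have hL : (⨅ n, u n) = 1 := le_antisymm hLe hL1
  exact ⟨key, hanti, hL ▸ htend⟩

lemma euler_aux_01 (c : ℝ) (hc0 : 0 < c) (hc1 : c ≤ 1) (u : ℕ → ℝ)
    (heq : ∀ n, u n = u (n+1) + c * ((u (n+1))^3 - u (n+1)))
    (h0 : 0 < u 0) (h1 : u 0 < 1) :
    (∀ n, 0 < u n ∧ u n < 1) ∧ Monotone u ∧ Filter.Tendsto u Filter.atTop (nhds 1) := by
  have key : ∀ n, 0 < u n ∧ u n < 1 := by
    intro n; induction n with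
    | zero => exact ⟨h0, h1⟩
    | succ n ih =>
      constructor
      · by_contra hle; push_neg at hle
        have h2 : u n ≤ 0 + c * (0^3 - 0) := (heq n).trans_le (euler_fmono c hc0 hc1 hle)
        norm_num at h2; linarith [ih.1]
      · by_contra hge; push_neg at hge
        have h2 : 1 + c * (1^3 - 1) ≤ u n := by
          calc 1 + c * (1^3 - 1) ≤ u (n+1) + c * ((u (n+1))^3 - u (n+1)) :=
                euler_fmono c hc0 hc1 hge
            _ = u n := (heq n).symm
        norm_num at h2; linarith [ih.2]
  have hmono : Monotone u := monotone_nat_of_le_succ fun n => by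
    obtain ⟨ha, hb⟩ := key (n+1)
    have h3 : (u (n+1))^3 - u (n+1) ≤ 0 := by
      nlinarith [mul_nonneg (mul_nonneg ha.le (by linarith : (0:ℝ) ≤ 1 - u (n+1)))
        (by linarith : (0:ℝ) ≤ 1 + u (n+1))]
    have h4 := heq n
    nlinarith [mul_nonneg hc0.le (neg_nonneg.2 h3)]
  have hbdd : BddAbove (Set.range u) := ⟨1, by rintro x ⟨n, rfl⟩; exact (key n).2.le⟩
  have htend := tendsto_atTop_ciSup hmono hbdd
  have hL0 : 0 < ⨆ n, u n := h0.trans_le (le_ciSup hbdd 0)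
  have hfix := euler_fixedpt c hc0 u heq _ htend
  have hL : (⨆ n, u n) = 1 := by
    have h5 : (⨆ n, u n) * (((⨆ n, u n) - 1) * ((⨆ n, u n) + 1)) = 0 := by
      linear_combination hfix
    rcases mul_eq_zero.mp h5 with h | h
    · exact absurd h hL0.ne'
    · rcases mul_eq_zero.mp h with h | h
      · linarith
      · linarith
  exact ⟨key, hmono, hL ▸ htend⟩

/-- Monotone convergence to the correct steady state for the implicit Euler scheme
with `0 < h ≤ ε²` and `u0 ∉ {0, 1, -1}`. -/
theorem implicit_euler_monotone_convergence
    (ε : ℝ) (hε0 : 0 < ε) (hε1 : ε < 1)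
    (h : ℝ) (hh0 : 0 < h) (hh1 : h ≤ ε ^ 2)
    (u0 : ℝ) (hu0 : u0 ∉ ({0, 1, -1} : Set ℝ))
    (u : ℕ → ℝ) (hinit : u 0 = u0)
    (hrec : ∀ n : ℕ, (u (n + 1) - u n) / h + (1 / ε ^ 2) * ((u (n + 1)) ^ 3 - u (n + 1)) = 0) :
    (1 < u0 → (∀ n : ℕ, 1 < u n) ∧ Antitone u) ∧
    (u0 < -1 → (∀ n : ℕ, u n < -1) ∧ Monotone u) ∧
    (0 < u0 ∧ u0 < 1 → (∀ n : ℕ, 0 < u n ∧ u n < 1) ∧ Monotone u) ∧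
    (-1 < u0 ∧ u0 < 0 → (∀ n : ℕ, -1 < u n ∧ u n < 0) ∧ Antitone u) ∧
    Filter.Tendsto u Filter.atTop (nhds (if 0 < u0 then (1 : ℝ) else -1)) := by
  simp only [Set.mem_insert_iff, Set.mem_singleton_iff, not_or] at hu0
  obtain ⟨hne0, hne1, hnem1⟩ := hu0
  have hε2 : (0:ℝ) < ε ^ 2 := by positivity
  set c : ℝ := h / ε ^ 2 with hc
  have hc0 : 0 < c := div_pos hh0 hε2
  have hc1 : c ≤ 1 := (div_le_one hε2).mpr hh1
  have heq : ∀ n, u n = u (n+1) + c * ((u (n+1))^3 - u (n+1)) := by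
    intro n
    have H := hrec n
    field_simp [hc] at H ⊢
    have hc' : c * ε ^ 2 = h := by rw [hc]; field_simp
    apply mul_left_cancel₀ hε2.ne'
    linear_combination -H - u (n+1) * (u (n+1) ^ 2 - 1) * hc'
  have heqv : ∀ n, (fun n => -u n) n =
      (fun n => -u n) (n+1) + c * (((fun n => -u n) (n+1))^3 - (fun n => -u n) (n+1)) := by
    intro n; simp only; linear_combination - heq n
  rcases lt_trichotomy u0 0 with hneg | hzero | hpos
  · rcases lt_trichotomy u0 (-1) with hlt | heq1 | hgt
    · obtain ⟨k, a, t⟩ := euler_aux_gt1 c hc0 hc1 (fun n => -u n) heqv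
        (by rw [hinit]; linarith)
      have hmono : Monotone u := fun i j hij => by
        have := a hij; simp only at this; linarith
      refine ⟨fun h1 => absurd h1 (by linarith), fun _ => ⟨fun n => by have := k n; linarith, hmono⟩,
        fun h1 => absurd h1.1 (by linarith), fun h1 => absurd h1.2 (by linarith), ?_⟩
      rw [if_neg (by linarith)]
      have := t.neg
      simpa using this
    · exact absurd heq1 hnem1
    · obtain ⟨k, m, t⟩ := euler_aux_01 c hc0 hc1 (fun n => -u n) heqv
        (by rw [hinit]; linarith) (by rw [hinit]; linarith)
      have hanti : Antitone u := fun i j hij => by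
        have := m hij; simp only at this; linarith
      refine ⟨fun h1 => absurd h1 (by linarith), fun h1 => absurd h1 (by linarith),
        fun h1 => absurd h1.1 (by linarith),
        fun _ => ⟨fun n => by have := k n; constructor <;> linarith [this.1, this.2], hanti⟩, ?_⟩
      rw [if_neg (by linarith)]
      have := t.neg
      simpa using this
  · exact absurd hzero hne0
  · rcases lt_trichotomy u0 1 with hlt | heq1 | hgt
    · obtain ⟨k, m, t⟩ := euler_aux_01 c hc0 hc1 u heq
        (by rw [hinit]; linarith) (by rw [hinit]; linarith)
      refine ⟨fun h1 => absurd h1 (by linarith), fun h1 => absurd h1 (by linarith),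
        fun _ => ⟨k, m⟩, fun h1 => absurd h1.2 (by linarith), ?_⟩
      rw [if_pos hpos]; exact t
    · exact absurd heq1 hne1
    · obtain ⟨k, a, t⟩ := euler_aux_gt1 c hc0 hc1 u heq (by rw [hinit]; linarith)
      refine ⟨fun _ => ⟨k, a⟩, fun h1 => absurd h1 (by linarith),
        fun h1 => absurd h1.2 (by linarith), fun h1 => absurd h1.2 (by linarith), ?_⟩
      rw [if_pos hpos]; exact t
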